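/- Let Λ₁(T, b, u) = (W - B + N) + T⁻¹(G - N)T and Λ₂(T, b, u) = [b^∧, Λ₁(T, b, u)] - τ^∧, where W, B, N, G are the fixed 5×5 matrices of the biased INS and b^∧ ∈ se₂(3). Then Λ = (Λ₁, Λ₂) is an equivariant lift: for any (D, δ) in SE₂(3) ⋉ se₂(3), Ad_{(D,δ)}(Λ(φ((D,δ),ξ), ψ((D,δ),u))) = Λ(ξ, u), where φ((D,δ),(T,b)) = (TD, Ad_{D⁻¹}(b^∧ - δ)^∨) and ψ((D,δ),(w, τ)) = (Ad_{D⁻¹}(w^∧ - δ)^∨ + Ω(D⁻¹)^∨, Ad_{D⁻¹}(τ^∧)^∨) with Ω(Z) = ZN - N. -/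
import Mathlib


open Matrix

/-- The `se₂(3)` hat map `ℝ⁹ → ℝ^{5×5}`. -/
def hat9 (x : Fin 9 → ℝ) : Matrix (Fin 5) (Fin 5) ℝ :=
  !![0, -x 2, x 1, x 3, x 6;
     x 2, 0, -x 0, x 4, x 7;
     -x 1, x 0, 0, x 5, x 8;
     0, 0, 0, 0, 0;
     0, 0, 0, 0, 0]

/-- The `se₂(3)` vee map, inverse of `hat9` on `se₂(3)`. -/
def vee9 (m : Matrix (Fin 5) (Fin 5) ℝ) : Fin 9 → ℝ :=
  ![m 2 1, m 0 2, m 1 0, m 0 3, m 1 3, m 2 3, m 0 4, m 1 4, m 2 4]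

/-- Membership in `SE₂(3)`. -/
def SE23 (M : Matrix (Fin 5) (Fin 5) ℝ) : Prop :=
  ∃ (A : Matrix (Fin 3) (Fin 3) ℝ) (a b : Fin 3 → ℝ),
    A * Aᵀ = 1 ∧ Aᵀ * A = 1 ∧ A.det = 1 ∧
    M = !![A 0 0, A 0 1, A 0 2, a 0, b 0;
           A 1 0, A 1 1, A 1 2, a 1, b 1;
           A 2 0, A 2 1, A 2 2, a 2, b 2;
           0, 0, 0, 1, 0;
           0, 0, 0, 0, 1]

/-- The matrix `N`, with a single 1 in entry (4,5). -/
def Nmat : Matrix (Fin 5) (Fin 5) ℝ :=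
  !![0, 0, 0, 0, 0;
     0, 0, 0, 0, 0;
     0, 0, 0, 0, 0;
     0, 0, 0, 0, 1;
     0, 0, 0, 0, 0]

/-- The gravity matrix `G = [[0, g, 0],[0,0,0],[0,0,0]]` for `g ∈ ℝ³`. -/
def Gmat (g : Fin 3 → ℝ) : Matrix (Fin 5) (Fin 5) ℝ :=
  hat9 ![0, 0, 0, g 0, g 1, g 2, 0, 0, 0]

/-- `Λ₁(T, b, u) = (W - B + N) + T⁻¹(G - N)T`, with `W = w^∧`, `B = b^∧`. -/
noncomputable def Lam1 (g : Fin 3 → ℝ) (T : Matrix (Fin 5) (Fin 5) ℝ) (b w : Fin 9 → ℝ) :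
    Matrix (Fin 5) (Fin 5) ℝ :=
  (hat9 w - hat9 b + Nmat) + T⁻¹ * (Gmat g - Nmat) * T

/-- `Λ₂(T, b, u) = [b^∧, Λ₁(T, b, u)] - τ^∧`. -/
noncomputable def Lam2 (g : Fin 3 → ℝ) (T : Matrix (Fin 5) (Fin 5) ℝ) (b w τ : Fin 9 → ℝ) :
    Matrix (Fin 5) (Fin 5) ℝ :=
  (hat9 b * Lam1 g T b w - Lam1 g T b w * hat9 b) - hat9 τ

/-- `Ω(Z) = ZN - N`. -/
def Omg (Z : Matrix (Fin 5) (Fin 5) ℝ) : Matrix (Fin 5) (Fin 5) ℝ := Z * Nmat - Nmat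

/-- The state action `φ((D,δ), (T, b)) = (TD, Ad_{D⁻¹}(b^∧ - δ)^∨)`. -/
noncomputable def phiTG (D δ : Matrix (Fin 5) (Fin 5) ℝ)
    (T : Matrix (Fin 5) (Fin 5) ℝ) (b : Fin 9 → ℝ) :
    Matrix (Fin 5) (Fin 5) ℝ × (Fin 9 → ℝ) :=
  (T * D, vee9 (D⁻¹ * (hat9 b - δ) * D))

/-- The input action
`ψ((D,δ), (w, τ)) = (Ad_{D⁻¹}(w^∧ - δ)^∨ + Ω(D⁻¹)^∨, Ad_{D⁻¹}(τ^∧)^∨)`. -/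
noncomputable def psiTG (D δ : Matrix (Fin 5) (Fin 5) ℝ) (w τ : Fin 9 → ℝ) :
    (Fin 9 → ℝ) × (Fin 9 → ℝ) :=
  (vee9 (D⁻¹ * (hat9 w - δ) * D + Omg D⁻¹), vee9 (D⁻¹ * hat9 τ * D))


set_option maxHeartbeats 1000000

section AuxEquivariantLift

@[simp] lemma v9_5 (x0 x1 x2 x3 x4 x5 x6 x7 x8 : ℝ) :
    (![x0,x1,x2,x3,x4,x5,x6,x7,x8]) (5 : Fin 9) = x5 := rfl
@[simp] lemma v9_6 (x0 x1 x2 x3 x4 x5 x6 x7 x8 : ℝ) :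
    (![x0,x1,x2,x3,x4,x5,x6,x7,x8]) (6 : Fin 9) = x6 := rfl
@[simp] lemma v9_7 (x0 x1 x2 x3 x4 x5 x6 x7 x8 : ℝ) :
    (![x0,x1,x2,x3,x4,x5,x6,x7,x8]) (7 : Fin 9) = x7 := rfl
@[simp] lemma v9_8 (x0 x1 x2 x3 x4 x5 x6 x7 x8 : ℝ) :
    (![x0,x1,x2,x3,x4,x5,x6,x7,x8]) (8 : Fin 9) = x8 := rfl

/-- A generic element of `SE₂(3)` as a 5×5 matrix. -/
def mk5 (A : Matrix (Fin 3) (Fin 3) ℝ) (a b : Fin 3 → ℝ) : Matrix (Fin 5) (Fin 5) ℝ :=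
  !![A 0 0, A 0 1, A 0 2, a 0, b 0;
     A 1 0, A 1 1, A 1 2, a 1, b 1;
     A 2 0, A 2 1, A 2 2, a 2, b 2;
     0, 0, 0, 1, 0;
     0, 0, 0, 0, 1]

lemma mk5_mul (A B : Matrix (Fin 3) (Fin 3) ℝ) (a b c d : Fin 3 → ℝ) :
    mk5 A a b * mk5 B c d = mk5 (A * B) (A *ᵥ c + a) (A *ᵥ d + b) := by
  ext i j
  fin_cases i <;> fin_cases j <;>
    simp [mk5, Matrix.mul_apply, Fin.sum_univ_five, Fin.sum_univ_three, Matrix.mulVec,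
      dotProduct, Matrix.vecHead, Matrix.vecTail, Function.comp, -mul_eq_zero]

lemma mk5_one : mk5 1 0 0 = 1 := by
  ext i j
  fin_cases i <;> fin_cases j <;>
    simp [mk5, Matrix.one_apply, Matrix.vecHead, Matrix.vecTail, Function.comp]

lemma Nmat_mul_mk5 (A : Matrix (Fin 3) (Fin 3) ℝ) (a b : Fin 3 → ℝ) :
    Nmat * mk5 A a b = Nmat := by
  ext i j
  fin_cases i <;> fin_cases j <;>
    simp [mk5, Nmat, Matrix.mul_apply, Fin.sum_univ_five, Matrix.vecHead, Matrix.vecTail,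
      Function.comp, -mul_eq_zero]

lemma hat9_sub (u v : Fin 9 → ℝ) : hat9 (u - v) = hat9 u - hat9 v := by
  ext i j
  fin_cases i <;> fin_cases j <;>
    simp [hat9, Matrix.vecHead, Matrix.vecTail, Function.comp] <;> ring

lemma hat9_vee9_add (X Y : Matrix (Fin 5) (Fin 5) ℝ) :
    hat9 (vee9 (X + Y)) = hat9 (vee9 X) + hat9 (vee9 Y) := by
  ext i j
  fin_cases i <;> fin_cases j <;>
    simp [hat9, vee9, Matrix.vecHead, Matrix.vecTail, Function.comp] <;> ring

/-- `hat9 ∘ vee9` is the identity on matrices of `se₂(3)` shape. -/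
lemma hv_struct (X : Matrix (Fin 5) (Fin 5) ℝ)
    (h3 : ∀ j, X 3 j = 0) (h4 : ∀ j, X 4 j = 0)
    (h00 : X 0 0 = 0) (h11 : X 1 1 = 0) (h22 : X 2 2 = 0)
    (h10 : X 1 0 = -X 0 1) (h20 : X 2 0 = -X 0 2) (h21 : X 2 1 = -X 1 2) :
    hat9 (vee9 X) = X := by
  ext i j
  fin_cases i <;> fin_cases j <;>
    simp [hat9, vee9, Matrix.vecHead, Matrix.vecTail, Function.comp, h3, h4,
      h00, h11, h22, h10, h20, h21]

lemma hv_conj (A : Matrix (Fin 3) (Fin 3) ℝ) (a b a' b' : Fin 3 → ℝ) (x : Fin 9 → ℝ) :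
    hat9 (vee9 (mk5 Aᵀ a' b' * hat9 x * mk5 A a b)) = mk5 Aᵀ a' b' * hat9 x * mk5 A a b := by
  apply hv_struct <;>
  first
  | (intro j; fin_cases j <;>
      simp [mk5, hat9, Matrix.mul_apply, Fin.sum_univ_five, Matrix.vecHead, Matrix.vecTail,
        Function.comp, -mul_eq_zero] <;> ring)
  | (simp [mk5, hat9, Matrix.mul_apply, Fin.sum_univ_five, Matrix.vecHead, Matrix.vecTail,
        Function.comp, -mul_eq_zero] <;> ring)

lemma hv_omega (A : Matrix (Fin 3) (Fin 3) ℝ) (a b : Fin 3 → ℝ) :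
    hat9 (vee9 (mk5 A a b * Nmat - Nmat)) = mk5 A a b * Nmat - Nmat := by
  apply hv_struct <;>
  first
  | (intro j; fin_cases j <;>
      simp [mk5, Nmat, Matrix.mul_apply, Fin.sum_univ_five, Matrix.vecHead, Matrix.vecTail,
        Function.comp, -mul_eq_zero])
  | (simp [mk5, Nmat, Matrix.mul_apply, Fin.sum_univ_five, Matrix.vecHead, Matrix.vecTail,
        Function.comp, -mul_eq_zero])

end AuxEquivariantLift

/-- `Λ = (Λ₁, Λ₂)` is an equivariant lift: for any `(D, δ)` in
`SE₂(3) ⋉ se₂(3)`, `Ad_{(D,δ)}(Λ(φ((D,δ),ξ), ψ((D,δ),u))) = Λ(ξ, u)`, where the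
Adjoint of the tangent group is `Ad_{(D,δ)}(γ, ζ) = (Ad_D γ, Ad_D ζ + [δ, Ad_D γ])`. -/
theorem tangent_group_lift_equivariant
    (g : Fin 3 → ℝ)
    (D δ : Matrix (Fin 5) (Fin 5) ℝ) (hD : SE23 D) (hδ : ∃ d : Fin 9 → ℝ, δ = hat9 d)
    (T : Matrix (Fin 5) (Fin 5) ℝ) (hT : SE23 T) (b w τ : Fin 9 → ℝ) :
    (D * Lam1 g (phiTG D δ T b).1 (phiTG D δ T b).2 (psiTG D δ w τ).1 * D⁻¹ =
        Lam1 g T b w) ∧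
    (D * Lam2 g (phiTG D δ T b).1 (phiTG D δ T b).2 (psiTG D δ w τ).1 (psiTG D δ w τ).2 * D⁻¹ +
        (δ * (D * Lam1 g (phiTG D δ T b).1 (phiTG D δ T b).2 (psiTG D δ w τ).1 * D⁻¹) -
          (D * Lam1 g (phiTG D δ T b).1 (phiTG D δ T b).2 (psiTG D δ w τ).1 * D⁻¹) * δ) =
      Lam2 g T b w τ) := by
  obtain ⟨A, aD, bD, hAAT, hATA, hdet, hDe⟩ := hD
  obtain ⟨d, rfl⟩ := hδ
  have hDmk : D = mk5 A aD bD := hDe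
  set E := mk5 Aᵀ (-(Aᵀ *ᵥ aD)) (-(Aᵀ *ᵥ bD)) with hE
  have h1v : ∀ v : Fin 3 → ℝ, A *ᵥ (-(Aᵀ *ᵥ v)) + v = 0 := by
    intro v
    rw [Matrix.mulVec_neg, Matrix.mulVec_mulVec, hAAT, Matrix.one_mulVec]
    simp
  have hDE : D * E = 1 := by
    rw [hDmk, hE, mk5_mul, hAAT, h1v, h1v, mk5_one]
  have hED : E * D = 1 := by
    rw [hDmk, hE, mk5_mul, hATA]
    have : ∀ v : Fin 3 → ℝ, Aᵀ *ᵥ v + -(Aᵀ *ᵥ v) = 0 := fun v => by simp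
    rw [this, this, mk5_one]
  have hinv : D⁻¹ = E := Matrix.inv_eq_right_inv hDE
  have hNd : Nmat * D = Nmat := by rw [hDmk, Nmat_mul_mk5]
  have hb' : hat9 (vee9 (D⁻¹ * (hat9 b - hat9 d) * D)) = D⁻¹ * (hat9 b - hat9 d) * D := by
    rw [hinv, hDmk, ← hat9_sub, hE]; exact hv_conj ..
  have hw' : hat9 (vee9 (D⁻¹ * (hat9 w - hat9 d) * D + Omg D⁻¹)) =
      D⁻¹ * (hat9 w - hat9 d) * D + (D⁻¹ * Nmat - Nmat) := by
    rw [hat9_vee9_add, Omg, hinv, hDmk, ← hat9_sub, hE, hv_conj, hv_omega]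
  have hτ' : hat9 (vee9 (D⁻¹ * hat9 τ * D)) = D⁻¹ * hat9 τ * D := by
    rw [hinv, hDmk, hE]; exact hv_conj ..
  have key1 : Lam1 g (T * D) (vee9 (D⁻¹ * (hat9 b - hat9 d) * D))
      (vee9 (D⁻¹ * (hat9 w - hat9 d) * D + Omg D⁻¹)) = E * Lam1 g T b w * D := by
    rw [Lam1, Lam1, hw', hb', Matrix.mul_inv_rev, hinv]
    rw [show E * Nmat - Nmat = E * Nmat * D - Nmat from by rw [mul_assoc, hNd]]
    noncomm_ring
  have conjDE : ∀ P : Matrix (Fin 5) (Fin 5) ℝ, D * (E * P * D) * E = P := by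
    intro P
    calc D * (E * P * D) * E = (D * E) * P * (D * E) := by noncomm_ring
    _ = P := by rw [hDE, one_mul, mul_one]
  have part1 : D * Lam1 g (phiTG D (hat9 d) T b).1 (phiTG D (hat9 d) T b).2
      (psiTG D (hat9 d) w τ).1 * D⁻¹ = Lam1 g T b w := by
    simp only [phiTG, psiTG]
    rw [key1, hinv, conjDE]
  refine ⟨part1, ?_⟩
  rw [part1]
  have hm : ∀ P Q : Matrix (Fin 5) (Fin 5) ℝ, (E * P * D) * (E * Q * D) = E * (P * Q) * D := by
    intro P Q
    calc (E * P * D) * (E * Q * D) = E * (P * ((D * E) * Q)) * D := by noncomm_ring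
    _ = _ := by rw [hDE, one_mul]
  have key2 : Lam2 g (T * D) (vee9 (D⁻¹ * (hat9 b - hat9 d) * D))
      (vee9 (D⁻¹ * (hat9 w - hat9 d) * D + Omg D⁻¹)) (vee9 (D⁻¹ * hat9 τ * D)) =
      E * ((hat9 b - hat9 d) * Lam1 g T b w - Lam1 g T b w * (hat9 b - hat9 d) - hat9 τ) * D := by
    rw [Lam2, key1, hb', hτ', hinv, hm, hm]
    noncomm_ring
  simp only [phiTG, psiTG]
  rw [key2, hinv, conjDE, Lam2]
  noncomm_ring
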